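/- arXiv:2012.11906 — 2 statements merged into one kernel-verified Lean document; each statement's English description precedes it below -/
import Mathlib

section
/- Let x₁, x₂ : ℝ → ℝ be C² solutions of the Lotka–Volterra competition system x₁' = a₁x₁(1 − x₁/a₂ − a₃x₂/a₂), x₂' = a₄x₂(1 − x₂/a₅ − a₆x₁/a₅), with y = x₁ and a₁, a₂, a₃, a₅ all nonzero. Then y satisfies the input-output equation a₁a₂a₃a₅·y''·y + (−a₁a₂a₃a₅ − a₂²a₄)(y')² + (a₁²a₃a₅ + a₁a₂a₃a₄a₆ − 2a₁a₂a₄)y'y² + (2a₁a₂²a₄ − a₁a₂a₃a₄a₅)y'y + (a₁²a₃a₄a₆ − a₁²a₄)y⁴ + (−a₁²a₂a₃a₄a₆ + 2a₁²a₂a₄ − a₁²a₃a₄a₅)y³ + (−a₁²a₂²a₄ + a₁²a₂a₃a₄a₅)y² = 0. -/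
theorem lotka_volterra_io_equation
    (a₁ a₂ a₃ a₄ a₅ a₆ : ℝ) (ha : a₁ * a₂ * a₃ * a₅ ≠ 0)
    (x₁ x₂ : ℝ → ℝ)
    (hx₁ : Differentiable ℝ x₁) (hx₁' : Differentiable ℝ (deriv x₁))
    (hx₂ : Differentiable ℝ x₂)
    (heq₁ : ∀ t, deriv x₁ t = a₁ * x₁ t * (1 - x₁ t / a₂ - a₃ * x₂ t / a₂))
    (heq₂ : ∀ t, deriv x₂ t = a₄ * x₂ t * (1 - x₂ t / a₅ - a₆ * x₁ t / a₅))
    (y : ℝ → ℝ) (hy : y = x₁) :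
    ∀ t,
      a₁ * a₂ * a₃ * a₅ * (deriv (deriv y) t) * y t
        + (-(a₁ * a₂ * a₃ * a₅) - a₂ ^ 2 * a₄) * (deriv y t) ^ 2
        + (a₁ ^ 2 * a₃ * a₅ + a₁ * a₂ * a₃ * a₄ * a₆ - 2 * a₁ * a₂ * a₄)
            * deriv y t * (y t) ^ 2
        + (2 * a₁ * a₂ ^ 2 * a₄ - a₁ * a₂ * a₃ * a₄ * a₅) * deriv y t * y t
        + (a₁ ^ 2 * a₃ * a₄ * a₆ - a₁ ^ 2 * a₄) * (y t) ^ 4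
        + (-(a₁ ^ 2 * a₂ * a₃ * a₄ * a₆) + 2 * a₁ ^ 2 * a₂ * a₄
            - a₁ ^ 2 * a₃ * a₄ * a₅) * (y t) ^ 3
        + (-(a₁ ^ 2 * a₂ ^ 2 * a₄) + a₁ ^ 2 * a₂ * a₃ * a₄ * a₅) * (y t) ^ 2 = 0 := by
  subst hy
  have ha₁ : a₁ ≠ 0 := by intro h; apply ha; rw [h]; ring
  have ha₂ : a₂ ≠ 0 := by intro h; apply ha; rw [h]; ring
  have ha₃ : a₃ ≠ 0 := by intro h; apply ha; rw [h]; ring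
  have ha₅ : a₅ ≠ 0 := by intro h; apply ha; rw [h]; ring
  intro t
  have h1 : HasDerivAt y (deriv y t) t := (hx₁ t).hasDerivAt
  have h2 : HasDerivAt x₂ (deriv x₂ t) t := (hx₂ t).hasDerivAt
  have inner : HasDerivAt (fun s => 1 - y s / a₂ - a₃ * x₂ s / a₂)
      (deriv y t * a₁⁻¹ * 0 + (0 - deriv y t / a₂ - a₃ * deriv x₂ t / a₂)) t := by
    simpa using ((hasDerivAt_const t (1:ℝ)).fun_sub (h1.div_const a₂)).fun_sub
      ((h2.const_mul a₃).div_const a₂)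
  have hprod : HasDerivAt (fun s => a₁ * y s * (1 - y s / a₂ - a₃ * x₂ s / a₂))
      (a₁ * deriv y t * (1 - y t / a₂ - a₃ * x₂ t / a₂)
        + a₁ * y t * (deriv y t * a₁⁻¹ * 0 + (0 - deriv y t / a₂ - a₃ * deriv x₂ t / a₂))) t := by
    simpa [mul_assoc, mul_comm, mul_left_comm] using (h1.const_mul a₁).fun_mul inner
  rw [heq₁ t, heq₂ t] at hprod
  have hfun : deriv y = fun s => a₁ * y s * (1 - y s / a₂ - a₃ * x₂ s / a₂) := funext heq₁
  have hdd := hprod.deriv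
  rw [← hfun] at hdd
  rw [hdd, heq₁ t]
  field_simp
  ring
end

section
/- Let K be a field and I the ideal in K(a₁,…,a₇)[x₂, x₃, x₂', x₃', x₂'', x₃'', y, y', y''] generated by the polynomials x₂' − (a₄a₇/a₆)x₃ + a₄x₂, x₃' − (1−a₅)a₆x₂ + a₇x₃, x₂'' − (a₄a₇/a₆)x₃' + a₄x₂', x₃'' − (1−a₅)a₆x₂' + a₇x₃', y − x₃, y' − x₃', y'' − x₃''. Then the polynomial y'' + (a₄+a₇)y' + a₄a₅a₇y lies in I. -/
open MvPolynomial

/-- Indeterminates: 0 = x₂, 1 = x₃, 2 = x₂', 3 = x₃', 4 = x₂'', 5 = x₃'',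
    6 = y, 7 = y', 8 = y''. -/
theorem io_polynomial_in_ideal
    (F : Type*) [Field F] (a₄ a₅ a₆ a₇ : F) (ha₆ : a₆ ≠ 0) :
    (X 8 + C (a₄ + a₇) * X 7 + C (a₄ * a₅ * a₇) * X 6 : MvPolynomial (Fin 9) F) ∈
      Ideal.span ({
        X 2 - C (a₄ * a₇ / a₆) * X 1 + C a₄ * X 0,
        X 3 - C ((1 - a₅) * a₆) * X 0 + C a₇ * X 1,
        X 4 - C (a₄ * a₇ / a₆) * X 3 + C a₄ * X 2,
        X 5 - C ((1 - a₅) * a₆) * X 2 + C a₇ * X 3,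
        X 6 - X 1, X 7 - X 3, X 8 - X 5} : Set (MvPolynomial (Fin 9) F)) := by
  set I := Ideal.span ({
        X 2 - C (a₄ * a₇ / a₆) * X 1 + C a₄ * X 0,
        X 3 - C ((1 - a₅) * a₆) * X 0 + C a₇ * X 1,
        X 4 - C (a₄ * a₇ / a₆) * X 3 + C a₄ * X 2,
        X 5 - C ((1 - a₅) * a₆) * X 2 + C a₇ * X 3,
        X 6 - X 1, X 7 - X 3, X 8 - X 5} : Set (MvPolynomial (Fin 9) F)) with hI
  have h1 : (X 2 - C (a₄ * a₇ / a₆) * X 1 + C a₄ * X 0 : MvPolynomial (Fin 9) F) ∈ I :=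
    Ideal.subset_span (by simp)
  have h2 : (X 3 - C ((1 - a₅) * a₆) * X 0 + C a₇ * X 1 : MvPolynomial (Fin 9) F) ∈ I :=
    Ideal.subset_span (by simp)
  have h4 : (X 5 - C ((1 - a₅) * a₆) * X 2 + C a₇ * X 3 : MvPolynomial (Fin 9) F) ∈ I :=
    Ideal.subset_span (by simp)
  have h5 : (X 6 - X 1 : MvPolynomial (Fin 9) F) ∈ I := Ideal.subset_span (by simp)
  have h6 : (X 7 - X 3 : MvPolynomial (Fin 9) F) ∈ I := Ideal.subset_span (by simp)
  have h7 : (X 8 - X 5 : MvPolynomial (Fin 9) F) ∈ I := Ideal.subset_span (by simp)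
  have hC : (C ((1 - a₅) * a₆) * C (a₄ * a₇ / a₆) : MvPolynomial (Fin 9) F)
      = C (a₄ * a₇) - C (a₄ * a₅ * a₇) := by
    rw [← C_mul, ← C_sub]
    congr 1
    field_simp
  have key : (X 8 + C (a₄ + a₇) * X 7 + C (a₄ * a₅ * a₇) * X 6 : MvPolynomial (Fin 9) F)
      = C ((1 - a₅) * a₆) * (X 2 - C (a₄ * a₇ / a₆) * X 1 + C a₄ * X 0)
        + C a₄ * (X 3 - C ((1 - a₅) * a₆) * X 0 + C a₇ * X 1)
        + (X 5 - C ((1 - a₅) * a₆) * X 2 + C a₇ * X 3)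
        + C (a₄ * a₅ * a₇) * (X 6 - X 1)
        + C (a₄ + a₇) * (X 7 - X 3)
        + (X 8 - X 5) := by
    have hca : (C a₄ * C a₇ : MvPolynomial (Fin 9) F) = C (a₄ * a₇) := by rw [← C_mul]
    have hsum : (C (a₄ + a₇) : MvPolynomial (Fin 9) F) = C a₄ + C a₇ := by rw [← C_add]
    linear_combination (X 1 : MvPolynomial (Fin 9) F) * hC - (X 1) * hca + (X 3) * hsum
  rw [key]
  exact add_mem (add_mem (add_mem (add_mem (add_mem
    (Ideal.mul_mem_left _ _ h1) (Ideal.mul_mem_left _ _ h2)) h4)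
    (Ideal.mul_mem_left _ _ h5)) (Ideal.mul_mem_left _ _ h6)) h7
end
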